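/- Let G be a maximal outerplanar graph of order n ≥ 4 with k internal triangles. Then G has exactly k + 2 vertices of degree 2. -/

import Mathlib

open SimpleGraph

/-- A general position set: no vertex of `S` lies on a geodesic between two
other vertices of `S`. -/
def IsGPSet {V : Type*} (G : SimpleGraph V) (S : Set V) : Prop :=
  ∀ ⦃u v w : V⦄, u ∈ S → v ∈ S → w ∈ S → u ≠ v → v ≠ w → u ≠ w →
    G.dist u w ≠ G.dist u v + G.dist v w

/-- The general position number of a graph. -/
noncomputable def gpNumber {V : Type*} (G : SimpleGraph V) : ℕ :=
  sSup {k | ∃ S : Set V, IsGPSet G S ∧ S.ncard = k}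

/-- Degree of a vertex (as the cardinality of its neighborhood). -/
noncomputable def degSet {V : Type*} (G : SimpleGraph V) (v : V) : ℕ :=
  (G.neighborSet v).ncard

/-- Maximum degree of a graph on `Fin n`. -/
noncomputable def maxDeg {n : ℕ} (G : SimpleGraph (Fin n)) : ℕ :=
  Finset.univ.sup (fun v => degSet G v)

/-- `x` lies strictly (clockwise) between `a` and `b` on the cycle `Fin n`. -/
def StrictBtw {n : ℕ} (a x b : Fin n) : Prop :=
  0 < (x - a).val ∧ (x - a).val < (b - a).val

/-- Chords `ab` and `cd` of the cycle `Fin n` cross each other. -/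
def Crossing {n : ℕ} (a b c d : Fin n) : Prop :=
  StrictBtw a c b ∧ StrictBtw b d a

/-- `G` is a maximal outerplanar (outerplane) graph, presented with its unique
Hamiltonian cycle `0, 1, …, n-1`: all chords are pairwise non-crossing, and no
further non-crossing chord can be added (a triangulation of an `n`-gon). -/
def IsMOPFin (n : ℕ) [NeZero n] (G : SimpleGraph (Fin n)) : Prop :=
  3 ≤ n ∧
  (∀ i : Fin n, G.Adj i (i + 1)) ∧
  (∀ a b c d : Fin n, G.Adj a b → G.Adj c d → ¬ Crossing a b c d) ∧
  (∀ a b : Fin n, a ≠ b → ¬ G.Adj a b → ∃ c d : Fin n, G.Adj c d ∧ Crossing a b c d)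

/-- The internal triangles of a maximal outerplane graph on `Fin n`:
triangles none of whose edges lies on the Hamiltonian cycle. -/
def InternalTriangles (n : ℕ) [NeZero n] (G : SimpleGraph (Fin n)) : Set (Finset (Fin n)) :=
  {T | T.card = 3 ∧ (∀ a ∈ T, ∀ b ∈ T, a ≠ b → G.Adj a b) ∧
    ∀ a ∈ T, ∀ b ∈ T, b ≠ a + 1}

/-- The fan graph `F_m = K₁ ⊕ P_m`: the join of the central vertex `none`
with a path on `m` vertices. -/
def fanGraph (m : ℕ) : SimpleGraph (Option (Fin m)) where
  Adj x y :=
    match x, y with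
    | none, none => False
    | none, some _ => True
    | some _, none => True
    | some i, some j => i.val + 1 = j.val ∨ j.val + 1 = i.val
  symm := by
    constructor
    intro x y h
    cases x <;> cases y <;> simp_all <;> omega
  loopless := by
    constructor
    intro x h
    cases x <;> simp_all

/-- The straight linear 2-tree: `vᵢ ~ vⱼ` iff `0 < |i - j| ≤ 2`. -/
def linear2Tree (n : ℕ) : SimpleGraph (Fin n) where
  Adj i j := i ≠ j ∧ i.val ≤ j.val + 2 ∧ j.val ≤ i.val + 2
  symm := by
    constructor
    intro i j h
    exact ⟨h.1.symm, h.2.2, h.2.1⟩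
  loopless := by
    constructor
    intro i h
    exact h.1 rfl

/-- The generalized sunflower graph built from a base graph `G0` on the cycle
`h_0 … h_{m-1}` by attaching `x` new vertices `v_0, …, v_{x-1}`,
where `v_i` is joined to `h_i` and `h_{(i+1) mod m}`. -/
def GSF (m x : ℕ) (G0 : SimpleGraph (Fin m)) : SimpleGraph (Fin m ⊕ Fin x) where
  Adj a b :=
    match a, b with
    | .inl u, .inl v => G0.Adj u v
    | .inl u, .inr i => u.val = i.val ∨ u.val = (i.val + 1) % m
    | .inr i, .inl u => u.val = i.val ∨ u.val = (i.val + 1) % m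
    | .inr _, .inr _ => False
  symm := by
    constructor
    intro a b h
    cases a <;> cases b <;> simp_all [SimpleGraph.adj_comm]
  loopless := by
    constructor
    intro a h
    cases a <;> simp_all

/-- `G` contains `K₄` as a minor: there exist four nonempty, pairwise disjoint,
connected branch sets that are pairwise joined by an edge. -/
def HasK4Minor {V : Type*} (G : SimpleGraph V) : Prop :=
  ∃ B : Fin 4 → Set V,
    (∀ i, (B i).Nonempty) ∧
    (∀ i, (G.induce (B i)).Connected) ∧
    (∀ i j, i ≠ j → Disjoint (B i) (B j)) ∧
    (∀ i j, i ≠ j → ∃ a ∈ B i, ∃ b ∈ B j, G.Adj a b)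

open Fin.CommRing Fin.NatCast

section Aux
variable {m : ℕ} [NeZero m]

lemma sub_val' (a x : Fin m) :
    (x - a).val = if a.val ≤ x.val then x.val - a.val else x.val + m - a.val := by
  have hm : 0 < m := Nat.pos_of_ne_zero (NeZero.ne m)
  have hx := x.isLt; have ha := a.isLt
  rw [Fin.sub_def]
  show (m - a.val + x.val) % m = _
  rcases le_or_gt a.val x.val with h | h
  · have he : m - a.val + x.val = (x.val - a.val) + 1 * m := by omega
    rw [he, Nat.add_mul_mod_self_right, if_pos h, Nat.mod_eq_of_lt (by omega)]
  · rw [Nat.mod_eq_of_lt (by omega), if_neg (by omega)]; omega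

lemma strictBtw_iff (a x b : Fin m) :
    StrictBtw a x b ↔ ((a.val < x.val ∧ x.val < b.val) ∨ (b.val < a.val ∧ a.val < x.val) ∨
      (x.val < b.val ∧ x.val < a.val ∧ b.val < a.val)) := by
  have h1 := sub_val' a x; have h2 := sub_val' a b
  have := a.isLt; have := x.isLt; have := b.isLt
  unfold StrictBtw; rw [h1, h2]; split_ifs <;> omega

lemma crossing_iff (a b c d : Fin m) :
    Crossing a b c d ↔
      (((a.val < c.val ∧ c.val < b.val) ∨ (b.val < a.val ∧ a.val < c.val) ∨
        (c.val < b.val ∧ c.val < a.val ∧ b.val < a.val)) ∧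
       ((b.val < d.val ∧ d.val < a.val) ∨ (a.val < b.val ∧ b.val < d.val) ∨
        (d.val < a.val ∧ d.val < b.val ∧ a.val < b.val))) := by
  unfold Crossing; rw [strictBtw_iff, strictBtw_iff]

end Aux

section Shift
variable {n : ℕ} [NeZero n]

/-- Rotation of a graph on the cycle. -/
def shiftG (G : SimpleGraph (Fin n)) (c : Fin n) : SimpleGraph (Fin n) where
  Adj i j := G.Adj (i + c) (j + c)
  symm := ⟨fun _ _ h => h.symm⟩
  loopless := ⟨fun i h => G.loopless.irrefl _ h⟩

@[simp] lemma shiftG_adj (G : SimpleGraph (Fin n)) (c i j : Fin n) :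
    (shiftG G c).Adj i j ↔ G.Adj (i + c) (j + c) := Iff.rfl

lemma strictBtw_shift (a x b c : Fin n) :
    StrictBtw (a + c) (x + c) (b + c) ↔ StrictBtw a x b := by
  unfold StrictBtw
  rw [add_sub_add_right_eq_sub, add_sub_add_right_eq_sub]

lemma crossing_shift (a b x y c : Fin n) :
    Crossing (a + c) (b + c) (x + c) (y + c) ↔ Crossing a b x y := by
  unfold Crossing
  rw [strictBtw_shift, strictBtw_shift]

lemma isMOP_shift {G : SimpleGraph (Fin n)} (hG : IsMOPFin n G) (c : Fin n) :
    IsMOPFin n (shiftG G c) := by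
  obtain ⟨h3, hham, hnc, hmax⟩ := hG
  refine ⟨h3, ?_, ?_, ?_⟩
  · intro i
    show G.Adj (i + c) (i + 1 + c)
    have : i + 1 + c = (i + c) + 1 := by ring
    rw [this]; exact hham (i + c)
  · intro a b x y hab hxy hcr
    rw [← crossing_shift a b x y c] at hcr
    exact hnc _ _ _ _ hab hxy hcr
  · intro a b hne hnadj
    have hne' : a + c ≠ b + c := fun h => hne (by
      have := congrArg (· - c) h; simpa using this)
    obtain ⟨u, v, huv, hcr⟩ := hmax (a + c) (b + c) hne' hnadj
    refine ⟨u - c, v - c, ?_, ?_⟩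
    · show G.Adj (u - c + c) (v - c + c)
      rwa [sub_add_cancel, sub_add_cancel]
    · have : Crossing (a + c) (b + c) (u - c + c) (v - c + c) := by
        rwa [sub_add_cancel, sub_add_cancel]
      rwa [crossing_shift] at this

lemma internalTriangles_shift (G : SimpleGraph (Fin n)) (c : Fin n) (T : Finset (Fin n)) :
    T ∈ InternalTriangles n (shiftG G c) ↔ T.image (· + c) ∈ InternalTriangles n G := by
  constructor
  · rintro ⟨hcard, hadj, hcons⟩
    refine ⟨?_, ?_, ?_⟩
    · rw [Finset.card_image_of_injective _ (add_left_injective c)]; exact hcard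
    · rintro a ha b hb hne
      simp only [Finset.mem_image] at ha hb
      obtain ⟨a', ha', rfl⟩ := ha; obtain ⟨b', hb', rfl⟩ := hb
      exact hadj a' ha' b' hb' (fun h => hne (by rw [h]))
    · rintro a ha b hb
      simp only [Finset.mem_image] at ha hb
      obtain ⟨a', ha', rfl⟩ := ha; obtain ⟨b', hb', rfl⟩ := hb
      intro h
      have : b' = a' + 1 := by
        have : a' + 1 + c = a' + c + 1 := by ring
        have h2 := h.trans this.symm
        have := congrArg (· - c) h2; simpa using this
      exact hcons a' ha' b' hb' this
  · rintro ⟨hcard, hadj, hcons⟩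
    refine ⟨?_, ?_, ?_⟩
    · rw [Finset.card_image_of_injective _ (add_left_injective c)] at hcard; exact hcard
    · intro a ha b hb hne
      show G.Adj (a + c) (b + c)
      exact hadj _ (Finset.mem_image_of_mem _ ha) _ (Finset.mem_image_of_mem _ hb)
        (fun h => hne (add_left_injective c h))
    · intro a ha b hb h
      refine hcons (a + c) (Finset.mem_image_of_mem _ ha) (b + c)
        (Finset.mem_image_of_mem _ hb) ?_
      rw [h]; ring

lemma internalTriangles_shift_ncard (G : SimpleGraph (Fin n)) (c : Fin n) :
    (InternalTriangles n (shiftG G c)).ncard = (InternalTriangles n G).ncard := by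
  have hinj : Function.Injective (fun T : Finset (Fin n) => T.image (· + c)) :=
    fun T1 T2 h => Finset.image_injective (add_left_injective c) h
  have himg : (fun T : Finset (Fin n) => T.image (· + c)) '' (InternalTriangles n (shiftG G c))
      = InternalTriangles n G := by
    ext T
    constructor
    · rintro ⟨T', hT', rfl⟩
      exact (internalTriangles_shift G c T').mp hT'
    · intro hT
      refine ⟨T.image (· - c), ?_, ?_⟩
      · rw [internalTriangles_shift]
        have : (T.image (· - c)).image (· + c) = T := by
          rw [Finset.image_image]
          have : ((· + c) ∘ (· - c) : Fin n → Fin n) = id := by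
            funext x; simp
          rw [this, Finset.image_id]
        rw [this]; exact hT
      · show (T.image (· - c)).image (· + c) = T
        rw [Finset.image_image]
        have : ((· + c) ∘ (· - c) : Fin n → Fin n) = id := by funext x; simp
        rw [this, Finset.image_id]
  rw [← himg, Set.ncard_image_of_injective _ hinj]

lemma degSet_shift (G : SimpleGraph (Fin n)) (c v : Fin n) :
    degSet (shiftG G c) v = degSet G (v + c) := by
  unfold degSet
  have : (shiftG G c).neighborSet v = (· - c) '' (G.neighborSet (v + c)) := by
    ext u
    simp only [SimpleGraph.mem_neighborSet, shiftG_adj, Set.mem_image]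
    constructor
    · intro h; exact ⟨u + c, h, by simp⟩
    · rintro ⟨w, hw, rfl⟩; simpa using hw
  rw [this, Set.ncard_image_of_injective _ (sub_left_injective)]

lemma ears_shift_ncard (G : SimpleGraph (Fin n)) (c : Fin n) :
    {v : Fin n | degSet (shiftG G c) v = 2}.ncard = {v : Fin n | degSet G v = 2}.ncard := by
  have : {v : Fin n | degSet (shiftG G c) v = 2} = (· - c) '' {v : Fin n | degSet G v = 2} := by
    ext v
    simp only [Set.mem_setOf_eq, Set.mem_image, degSet_shift]
    constructor
    · intro h; exact ⟨v + c, h, by simp⟩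
    · rintro ⟨w, hw, rfl⟩; simpa using hw
  rw [this, Set.ncard_image_of_injective _ sub_left_injective]

section Ear
variable {n : ℕ} [NeZero n]

lemma val0 (hn : 4 ≤ n) : ((0 : Fin n)).val = 0 := rfl
lemma val1 (hn : 4 ≤ n) : ((1 : Fin n)).val = 1 := by
  rw [Fin.val_one']; exact Nat.mod_eq_of_lt (by omega)
lemma val2 (hn : 4 ≤ n) : ((2 : Fin n)).val = 2 := by
  have h : (2 : Fin n) = ((2 : ℕ) : Fin n) := by norm_cast
  rw [h, Fin.val_natCast]; exact Nat.mod_eq_of_lt (by omega)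

/-- spans of edges of G that are "chords" -/
def spanSet (G : SimpleGraph (Fin n)) : Set ℕ :=
  {s | ∃ a b : Fin n, G.Adj a b ∧ (b - a).val = s ∧ 2 ≤ s ∧ s ≤ n - 2}

lemma spanSet_shift (G : SimpleGraph (Fin n)) (c : Fin n) :
    spanSet (shiftG G c) = spanSet G := by
  ext s
  constructor
  · rintro ⟨a, b, hab, hs, h2, h2'⟩
    exact ⟨a + c, b + c, hab, by rwa [add_sub_add_right_eq_sub], h2, h2'⟩
  · rintro ⟨a, b, hab, hs, h2, h2'⟩
    refine ⟨a - c, b - c, ?_, ?_, h2, h2'⟩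
    · show G.Adj (a - c + c) (b - c + c); rwa [sub_add_cancel, sub_add_cancel]
    · rwa [sub_sub_sub_cancel_right]

lemma spanSet_nonempty {G : SimpleGraph (Fin n)} (hn : 4 ≤ n) (hG : IsMOPFin n G) :
    (spanSet G).Nonempty := by
  obtain ⟨-, hham, hnc, hmax⟩ := hG
  by_cases h02 : G.Adj 0 2
  · exact ⟨2, 0, 2, h02, by rw [sub_zero, val2 hn], le_refl 2, by omega⟩
  · have hv0 : ((0 : Fin n)).val = 0 := val0 hn
    have hv2 : ((2 : Fin n)).val = 2 := val2 hn
    have hne : (0 : Fin n) ≠ 2 := by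
      intro h; have := congrArg Fin.val h; omega
    obtain ⟨c, d, hcd, hcr⟩ := hmax 0 2 hne h02
    rw [crossing_iff] at hcr
    obtain ⟨h1, h2⟩ := hcr
    have hc : c.val = 1 := by omega
    have hd : 2 < d.val := by omega
    have hdlt := d.isLt
    have hdc : (d - c).val = d.val - 1 := by
      rw [sub_val', if_pos (by omega : c.val ≤ d.val)]; omega
    exact ⟨(d - c).val, c, d, hcd, rfl, by omega, by omega⟩

lemma exists_ear {G : SimpleGraph (Fin n)} (hn : 4 ≤ n) (hG : IsMOPFin n G) :
    ∃ a : Fin n, G.Adj a (a + 2) ∧ ∀ u, G.Adj (a + 1) u ↔ (u = a ∨ u = a + 2) := by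
  have hSne := spanSet_nonempty hn hG
  set s₀ := sInf (spanSet G) with hs₀
  have hmem := Nat.sInf_mem hSne
  obtain ⟨a, b, hab, hspan, h2, h2'⟩ := hmem
  -- shift so the chord starts at 0
  set G1 := shiftG G a with hG1
  have hG1mop := isMOP_shift hG a
  have hS1 : spanSet G1 = spanSet G := spanSet_shift G a
  set B := b - a with hB
  have hAdj0B : G1.Adj 0 B := by
    show G.Adj (0 + a) (b - a + a); rwa [zero_add, sub_add_cancel]
  have hBval : B.val = s₀ := hspan
  -- minimality forces s₀ = 2
  have hs2 : s₀ = 2 := by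
    by_contra hne2
    have h3 : 3 ≤ s₀ := by omega
    obtain ⟨-, hham1, hnc1, hmax1⟩ := hG1mop
    have hv1 : ((1 : Fin n)).val = 1 := val1 hn
    have h1B : (1 : Fin n) ≠ B := by
      intro h; have := congrArg Fin.val h; omega
    have hB1val : (B - 1).val = s₀ - 1 := by
      rw [sub_val', if_pos (by omega : (1 : Fin n).val ≤ B.val)]; omega
    by_cases hadj1B : G1.Adj 1 B
    · have : s₀ - 1 ∈ spanSet G1 := ⟨1, B, hadj1B, hB1val, by omega, by omega⟩
      rw [hS1] at this
      have := Nat.sInf_le this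
      omega
    · obtain ⟨c, d, hcd, hcr⟩ := hmax1 1 B h1B hadj1B
      have hv1' : ((1 : Fin n)).val = 1 := val1 hn
      rw [crossing_iff] at hcr
      obtain ⟨hc1, hd1⟩ := hcr
      have hcval : 1 < c.val ∧ c.val < s₀ := by omega
      have hdlt := d.isLt
      rcases (by omega : d.val = 0 ∨ s₀ < d.val) with hd0 | hds
      · -- chord (d=0, c): smaller span
        have hd0' : d = 0 := by
          apply Fin.ext; rw [hd0]; rfl
        have : c.val ∈ spanSet G1 := by
          refine ⟨0, c, ?_, by rw [sub_zero], by omega, by omega⟩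
          rw [← hd0']; exact hcd.symm
        rw [hS1] at this
        have := Nat.sInf_le this
        omega
      · -- (c,d) crosses (0,B)
        refine hnc1 0 B c d hAdj0B hcd ?_
        have hv0 : ((0 : Fin n)).val = 0 := val0 hn
        rw [crossing_iff]
        omega
  -- now B = 2, so G.Adj a (a+2); show a+1 is an ear
  have hBeq : B = 2 := by
    apply Fin.ext; rw [hBval, hs2, val2 hn]
  have hb : b = a + 2 := by
    have : b - a = 2 := hBeq
    rw [sub_eq_iff_eq_add] at this
    rw [this]; ring
  obtain ⟨-, hham, hnc, hmax⟩ := hG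
  have hadj02 : G.Adj a (a + 2) := by rw [hb] at hab; exact hab
  refine ⟨a, hadj02, fun u => ⟨?_, ?_⟩⟩
  · intro hadj
    by_contra hcon
    push_neg at hcon
    obtain ⟨hu1, hu2⟩ := hcon
    have hu3 : u ≠ a + 1 := fun h => (G.ne_of_adj hadj) h.symm
    refine hnc a (a + 2) (a + 1) u hadj02 hadj ?_
    constructor
    · have h' : StrictBtw (0 + a) (1 + a) (2 + a) ↔ StrictBtw 0 1 2 := strictBtw_shift 0 1 2 a
      rw [zero_add, add_comm 1 a, add_comm 2 a] at h'
      have hv0 : ((0 : Fin n)).val = 0 := val0 hn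
      have hv1 : ((1 : Fin n)).val = 1 := val1 hn
      have hv2 : ((2 : Fin n)).val = 2 := val2 hn
      rw [h', strictBtw_iff]
      omega
    · have heq : u = (u - a) + a := by ring
      have h' : StrictBtw (2 + a) ((u - a) + a) (0 + a) ↔ StrictBtw 2 (u - a) 0 :=
        strictBtw_shift 2 (u - a) 0 a
      rw [zero_add, add_comm 2 a, ← heq] at h'
      have hv0 : ((0 : Fin n)).val = 0 := val0 hn
      have hv1 : ((1 : Fin n)).val = 1 := val1 hn
      have hv2 : ((2 : Fin n)).val = 2 := val2 hn
      rw [h', strictBtw_iff]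
      have hne0 : (u - a).val ≠ 0 := by
        intro h
        exact hu1 (sub_eq_zero.mp (Fin.ext (by omega) : u - a = 0))
      have hne1 : (u - a).val ≠ 1 := by
        intro h
        apply hu3
        have he : u - a = 1 := Fin.ext (by omega)
        rw [← sub_add_cancel u a, he]; ring
      have hne2 : (u - a).val ≠ 2 := by
        intro h
        apply hu2
        have he : u - a = 2 := Fin.ext (by omega)
        rw [← sub_add_cancel u a, he]; ring
      omega
  · intro h
    rcases h with h | h
    · rw [h]; exact (hham a).symm
    · rw [h]
      have h' := hham (a + 1)
      have e2 : a + 1 + 1 = a + 2 := by ring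
      rwa [e2] at h'

end Ear

section Step

variable {n : ℕ} [NeZero n]

/-- the vertex n-1 -/
def zz (n : ℕ) [NeZero n] : Fin n :=
  ⟨n - 1, by have := Nat.pos_of_ne_zero (NeZero.ne n); omega⟩

/-- the vertex n-2 -/
def ww (n : ℕ) [NeZero n] : Fin n :=
  ⟨n - 2, by have := Nat.pos_of_ne_zero (NeZero.ne n); omega⟩

@[simp] lemma zz_val : (zz n).val = n - 1 := rfl
@[simp] lemma ww_val : (ww n).val = n - 2 := rfl

lemma val_add_one_gen (hn : 2 ≤ n) (a : Fin n) : (a + 1).val = (a.val + 1) % n := by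
  rw [Fin.add_def, Fin.val_one', Nat.mod_eq_of_lt (show 1 < n by omega)]

lemma adj_ww_zz {G : SimpleGraph (Fin n)} (hn : 4 ≤ n) (hG : IsMOPFin n G) :
    G.Adj (ww n) (zz n) := by
  have h := hG.2.1 (ww n)
  have he : ww n + 1 = zz n := by
    apply Fin.ext
    rw [val_add_one_gen (by omega), ww_val, zz_val, Nat.mod_eq_of_lt (by omega)]
    omega
  rwa [he] at h

lemma adj_zero_one {G : SimpleGraph (Fin n)} (hn : 4 ≤ n) (hG : IsMOPFin n G) :
    G.Adj 0 1 := by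
  have h := hG.2.1 0
  rwa [zero_add] at h

/-- the closing edge of the smaller polygon -/
lemma adj_ww_zero {G : SimpleGraph (Fin n)} (hn : 4 ≤ n) (hG : IsMOPFin n G)
    (hear : ∀ u, G.Adj (zz n) u ↔ (u = ww n ∨ u = 0)) :
    G.Adj (ww n) 0 := by
  obtain ⟨-, hham, hnc, hmax⟩ := hG
  by_contra hno
  have hne : ww n ≠ 0 := by
    intro h; have := congrArg Fin.val h; simp at this; omega
  obtain ⟨c, d, hcd, hcr⟩ := hmax (ww n) 0 hne hno
  rw [crossing_iff] at hcr
  have hv0 : ((0 : Fin n)).val = 0 := rfl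
  have hwv : (ww n).val = n - 2 := rfl
  obtain ⟨h1, h2⟩ := hcr
  have hclt := c.isLt
  have hc : c.val = n - 1 := by omega
  have hzv : (zz n).val = n - 1 := rfl
  have hczz : c = zz n := Fin.ext (by omega)
  have hd := (hear d).mp (by rwa [hczz] at hcd)
  have hd2 : 0 < d.val ∧ d.val < n - 2 := by omega
  rcases hd with rfl | rfl
  · rw [hwv] at hd2; omega
  · rw [hv0] at hd2; omega

end Step

section StepB

variable {n : ℕ} [NeZero n]

/-- Existence and uniqueness of the common neighbour of `0` and `n-2`
strictly inside the smaller polygon. -/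
lemma exists_y {G : SimpleGraph (Fin n)} (hn : 4 ≤ n) (hG : IsMOPFin n G)
    (hear : ∀ u, G.Adj (zz n) u ↔ (u = ww n ∨ u = 0)) :
    ∃ y : Fin n, G.Adj 0 y ∧ G.Adj (ww n) y ∧ 0 < y.val ∧ y.val < n - 2 ∧
      (∀ y' : Fin n, G.Adj 0 y' → G.Adj (ww n) y' → 0 < y'.val → y'.val < n - 2 → y' = y) := by
  classical
  obtain ⟨-, hham, hnc, hmax⟩ := hG
  have hv0 : ((0 : Fin n)).val = 0 := rfl
  have hwv : (ww n).val = n - 2 := rfl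
  have hzv : (zz n).val = n - 1 := rfl
  -- uniqueness part first (for any two candidates)
  have huniq : ∀ y₁ y₂ : Fin n, G.Adj 0 y₁ → G.Adj (ww n) y₁ → 0 < y₁.val → y₁.val < n - 2 →
      G.Adj 0 y₂ → G.Adj (ww n) y₂ → 0 < y₂.val → y₂.val < n - 2 → y₁ = y₂ := by
    have key : ∀ y₁ y₂ : Fin n, G.Adj 0 y₁ → G.Adj (ww n) y₁ → 0 < y₁.val → y₁.val < n - 2 →
        G.Adj 0 y₂ → G.Adj (ww n) y₂ → 0 < y₂.val → y₂.val < n - 2 →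
        y₁.val < y₂.val → False := by
      intro y₁ y₂ h01 hw1 hp1 hl1 h02 hw2 hp2 hl2 hlt
      refine hnc y₁ (ww n) y₂ 0 hw1.symm h02.symm ?_
      rw [crossing_iff]
      omega
    intro y₁ y₂ h01 hw1 hp1 hl1 h02 hw2 hp2 hl2
    rcases lt_trichotomy y₁.val y₂.val with h | h | h
    · exact absurd (key y₁ y₂ h01 hw1 hp1 hl1 h02 hw2 hp2 hl2 h) (fun x => x)
    · exact Fin.ext h
    · exact absurd (key y₂ y₁ h02 hw2 hp2 hl2 h01 hw1 hp1 hl1 h) (fun x => x)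
  -- existence via the largest neighbour of 0 below n-2
  set P : ℕ → Prop := fun m => ∃ h : m < n, 0 < m ∧ m < n - 2 ∧ G.Adj 0 ⟨m, h⟩ with hP
  have hP1 : P 1 := by
    refine ⟨by omega, by omega, by omega, ?_⟩
    have h1 : (⟨1, by omega⟩ : Fin n) = 1 := Fin.ext (by rw [val1 hn])
    rw [h1]
    have h0 := hham 0
    rwa [zero_add] at h0
  have hble : 1 ≤ n := by omega
  set m := Nat.findGreatest P n with hm
  have hPm : P m := Nat.findGreatest_spec (by omega : 1 ≤ n) hP1
  have hgreat : ∀ k, m < k → k ≤ n → ¬ P k := fun k hk hk' =>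
    Nat.findGreatest_is_greatest hk hk'
  obtain ⟨hmlt, hm0, hmn2, hadj0m⟩ := hPm
  set y := (⟨m, hmlt⟩ : Fin n) with hy
  have hyval : y.val = m := rfl
  by_cases hyw : G.Adj (ww n) y
  · exact ⟨y, hadj0m, hyw, by omega, by omega, fun y' a b c d =>
      huniq y' y a b c d hadj0m hyw (by omega) (by omega)⟩
  · -- use maximality on the pair (y, ww n)
    have hne : y ≠ ww n := by
      intro h; have := congrArg Fin.val h; rw [hyval, hwv] at this; omega
    have hnadj : ¬ G.Adj y (ww n) := fun h => hyw h.symm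
    obtain ⟨c, d, hcd, hcr⟩ := hmax y (ww n) hne hnadj
    exfalso
    rw [crossing_iff] at hcr
    obtain ⟨h1, h2⟩ := hcr
    rw [hyval, hwv] at h1 h2
    have hclt := c.isLt
    have hdlt := d.isLt
    have hc : m < c.val ∧ c.val < n - 2 := by omega
    have hd : d.val = n - 1 ∨ d.val < m := by omega
    rcases hd with hd | hd
    · -- d = zz, but c is not a neighbour of zz
      have hdzz : d = zz n := Fin.ext (by omega)
      have hsym := hcd.symm
      rw [hdzz] at hsym
      rcases (hear c).mp hsym with rfl | rfl
      · rw [hwv] at hc; omega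
      · rw [hv0] at hc; omega
    · rcases Nat.eq_zero_or_pos d.val with hd0 | hdpos
      · -- d = 0 : contradicts maximality of m
        have hd0' : d = 0 := Fin.ext (by omega)
        apply hgreat c.val (by omega) (by omega)
        have hcadj : G.Adj 0 c := by rw [hd0'] at hcd; exact hcd.symm
        have hmk : (⟨c.val, c.isLt⟩ : Fin n) = c := Fin.ext rfl
        exact ⟨c.isLt, by omega, by omega, by rw [hmk]; exact hcadj⟩
      · -- 0 < d < m : (d,c) crosses (0,y)
        refine hnc 0 y d c hadj0m hcd.symm ?_
        rw [crossing_iff]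
        rw [hv0, hyval]
        omega

end StepB

section StepC

variable {n : ℕ} [NeZero n]

/-- inclusion of `Fin (n-1)` into `Fin n` -/
def emb (n : ℕ) (i : Fin (n - 1)) : Fin n :=
  ⟨i.val, lt_of_lt_of_le i.isLt (Nat.sub_le n 1)⟩

@[simp] lemma emb_val (i : Fin (n - 1)) : (emb n i).val = i.val := rfl

/-- the graph obtained by deleting the ear vertex `n-1` -/
def Gp (n : ℕ) (G : SimpleGraph (Fin n)) : SimpleGraph (Fin (n - 1)) where
  Adj i j := G.Adj (emb n i) (emb n j)
  symm := ⟨fun _ _ h => h.symm⟩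
  loopless := ⟨fun i h => G.loopless.irrefl _ h⟩

@[simp] lemma Gp_adj (G : SimpleGraph (Fin n)) (i j : Fin (n - 1)) :
    (Gp n G).Adj i j ↔ G.Adj (emb n i) (emb n j) := Iff.rfl

lemma mop_Gp [NeZero (n - 1)] {G : SimpleGraph (Fin n)} (hn : 4 ≤ n) (hG : IsMOPFin n G)
    (hear : ∀ u, G.Adj (zz n) u ↔ (u = ww n ∨ u = 0)) :
    IsMOPFin (n - 1) (Gp n G) := by
  have hw0 : G.Adj (ww n) 0 := adj_ww_zero hn hG hear
  obtain ⟨-, hham, hnc, hmax⟩ := hG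
  have hv0 : ((0 : Fin n)).val = 0 := rfl
  have hwv : (ww n).val = n - 2 := rfl
  have hzv : (zz n).val = n - 1 := rfl
  refine ⟨by omega, ?_, ?_, ?_⟩
  · -- Hamiltonian edges
    intro i
    have hilt := i.isLt
    rcases Nat.lt_or_ge i.val (n - 2) with hi | hi
    · have he : emb n (i + 1) = emb n i + 1 := by
        apply Fin.ext
        rw [emb_val, val_add_one_gen (by omega : 2 ≤ n), emb_val,
          val_add_one_gen (show 2 ≤ n - 1 by omega) i,
          Nat.mod_eq_of_lt (by omega), Nat.mod_eq_of_lt (by omega)]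
      show G.Adj (emb n i) (emb n (i + 1))
      rw [he]
      exact hham (emb n i)
    · have hi2 : i.val = n - 2 := by omega
      have he1 : emb n i = ww n := Fin.ext (by rw [emb_val, hi2, hwv])
      have he2 : emb n (i + 1) = 0 := by
        apply Fin.ext
        rw [emb_val, val_add_one_gen (show 2 ≤ n - 1 by omega) i, hi2, hv0]
        have : n - 2 + 1 = n - 1 := by omega
        rw [this, Nat.mod_self]
      show G.Adj (emb n i) (emb n (i + 1))
      rw [he1, he2]
      exact hw0
  · -- non-crossing
    intro a b c d hab hcd hcr
    refine hnc (emb n a) (emb n b) (emb n c) (emb n d) hab hcd ?_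
    have h1 := (crossing_iff a b c d).mp hcr
    exact (crossing_iff (emb n a) (emb n b) (emb n c) (emb n d)).mpr h1
  · -- maximality
    intro a b hne hnadj
    have hne' : emb n a ≠ emb n b := by
      intro h
      apply hne
      have h2 : (emb n a).val = (emb n b).val := congrArg Fin.val h
      exact Fin.ext h2
    obtain ⟨c, d, hcd, hcr⟩ := hmax (emb n a) (emb n b) hne' hnadj
    rw [crossing_iff] at hcr
    obtain ⟨h1, h2⟩ := hcr
    have hea : (emb n a).val = a.val := rfl
    have heb : (emb n b).val = b.val := rfl
    have halt : a.val < n - 1 := a.isLt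
    have hblt : b.val < n - 1 := b.isLt
    have hclt := c.isLt
    have hdlt := d.isLt
    have hcz : c.val < n - 1 := by
      by_contra hcc
      have hcz' : c = zz n := Fin.ext (by omega)
      have hsym := hcd
      rw [hcz'] at hsym
      rcases (hear d).mp hsym with rfl | rfl
      · omega
      · omega
    have hdz : d.val < n - 1 := by
      by_contra hdd
      have hdz' : d = zz n := Fin.ext (by omega)
      have hsym := hcd.symm
      rw [hdz'] at hsym
      rcases (hear c).mp hsym with rfl | rfl
      · omega
      · omega
    refine ⟨⟨c.val, hcz⟩, ⟨d.val, hdz⟩, ?_, ?_⟩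
    · show G.Adj (emb n ⟨c.val, hcz⟩) (emb n ⟨d.val, hdz⟩)
      have e1 : emb n ⟨c.val, hcz⟩ = c := Fin.ext rfl
      have e2 : emb n ⟨d.val, hdz⟩ = d := Fin.ext rfl
      rw [e1, e2]; exact hcd
    · rw [crossing_iff]
      exact ⟨h1, h2⟩

end StepC

section StepD

variable {n : ℕ} [NeZero n]

lemma emb_inj : Function.Injective (emb n) := by
  intro a b h
  have h2 : (emb n a).val = (emb n b).val := congrArg Fin.val h
  exact Fin.ext h2

lemma deg_zz {G : SimpleGraph (Fin n)} (hn : 4 ≤ n)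
    (hear : ∀ u, G.Adj (zz n) u ↔ (u = ww n ∨ u = 0)) :
    degSet G (zz n) = 2 := by
  have hNS : G.neighborSet (zz n) = {ww n, 0} := by
    ext u
    simp only [SimpleGraph.mem_neighborSet, Set.mem_insert_iff, Set.mem_singleton_iff]
    exact hear u
  rw [degSet, hNS]
  refine Set.ncard_pair ?_
  intro h
  have := congrArg Fin.val h
  have hwv : (ww n).val = n - 2 := rfl
  have hv0 : ((0 : Fin n)).val = 0 := rfl
  omega

lemma not_adj_zz {G : SimpleGraph (Fin n)} (hn : 4 ≤ n)
    (hear : ∀ u, G.Adj (zz n) u ↔ (u = ww n ∨ u = 0))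
    {u : Fin n} (h0 : u.val ≠ 0) (h2 : u.val ≠ n - 2) : ¬ G.Adj u (zz n) := by
  intro h
  rcases (hear u).mp h.symm with rfl | rfl
  · exact h2 rfl
  · exact h0 rfl

lemma NS_mid {G : SimpleGraph (Fin n)} (hn : 4 ≤ n)
    (hear : ∀ u, G.Adj (zz n) u ↔ (u = ww n ∨ u = 0))
    {v : Fin (n - 1)} (h0 : v.val ≠ 0) (h2 : v.val ≠ n - 2) :
    G.neighborSet (emb n v) = emb n '' ((Gp n G).neighborSet v) := by
  ext u
  simp only [SimpleGraph.mem_neighborSet, Set.mem_image]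
  constructor
  · intro h
    have huz : u.val ≠ n - 1 := by
      intro hval
      have huzz : u = zz n := Fin.ext hval
      rw [huzz] at h
      exact not_adj_zz hn hear (show (emb n v).val ≠ 0 from h0) (show (emb n v).val ≠ n - 2 from h2) h
    have hult : u.val < n - 1 := by have := u.isLt; omega
    refine ⟨⟨u.val, hult⟩, ?_, Fin.ext rfl⟩
    show G.Adj (emb n v) (emb n ⟨u.val, hult⟩)
    have he : emb n ⟨u.val, hult⟩ = u := Fin.ext rfl
    rw [he]
    exact h
  · rintro ⟨u', hu', rfl⟩
    exact hu'

lemma deg_mid {G : SimpleGraph (Fin n)} (hn : 4 ≤ n)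
    (hear : ∀ u, G.Adj (zz n) u ↔ (u = ww n ∨ u = 0))
    {v : Fin (n - 1)} (h0 : v.val ≠ 0) (h2 : v.val ≠ n - 2) :
    degSet G (emb n v) = degSet (Gp n G) v := by
  rw [degSet, degSet, NS_mid hn hear h0 h2, Set.ncard_image_of_injective _ emb_inj]

lemma NS_end {G : SimpleGraph (Fin n)} (hn : 4 ≤ n)
    (hear : ∀ u, G.Adj (zz n) u ↔ (u = ww n ∨ u = 0))
    {v : Fin (n - 1)} (hv : v.val = 0 ∨ v.val = n - 2) :
    G.neighborSet (emb n v) = insert (zz n) (emb n '' ((Gp n G).neighborSet v)) := by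
  have hvz : G.Adj (emb n v) (zz n) := by
    refine SimpleGraph.Adj.symm ((hear (emb n v)).mpr ?_)
    rcases hv with hv | hv
    · right; exact Fin.ext hv
    · left; exact Fin.ext hv
  ext u
  simp only [SimpleGraph.mem_neighborSet, Set.mem_insert_iff, Set.mem_image]
  constructor
  · intro h
    rcases eq_or_ne u.val (n - 1) with hu | hu
    · left; exact Fin.ext hu
    · right
      have hult : u.val < n - 1 := by have := u.isLt; omega
      refine ⟨⟨u.val, hult⟩, ?_, Fin.ext rfl⟩
      show G.Adj (emb n v) (emb n ⟨u.val, hult⟩)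
      have he : emb n ⟨u.val, hult⟩ = u := Fin.ext rfl
      rw [he]
      exact h
  · rintro (rfl | ⟨u', hu', rfl⟩)
    · exact hvz
    · exact hu'

lemma deg_end {G : SimpleGraph (Fin n)} (hn : 4 ≤ n)
    (hear : ∀ u, G.Adj (zz n) u ↔ (u = ww n ∨ u = 0))
    {v : Fin (n - 1)} (hv : v.val = 0 ∨ v.val = n - 2) :
    degSet G (emb n v) = degSet (Gp n G) v + 1 := by
  rw [degSet, degSet, NS_end hn hear hv]
  rw [Set.ncard_insert_of_notMem ?_ (Set.toFinite _), Set.ncard_image_of_injective _ emb_inj]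
  rintro ⟨u', hu', he⟩
  have := congrArg Fin.val he
  have h1 : u'.val = n - 1 := this
  have := u'.isLt
  omega

end StepD

section StepE

variable {n : ℕ} [NeZero n] [NeZero (n - 1)]

lemma ncard_triple {α : Type*} (a b c : α) (hab : a ≠ b) (hac : a ≠ c) (hbc : b ≠ c) :
    ({a, b, c} : Set α).ncard = 3 := by
  rw [Set.ncard_insert_of_notMem (by simp [hab, hac]) (Set.toFinite _),
    Set.ncard_insert_of_notMem (by simp [hbc]) (Set.toFinite _), Set.ncard_singleton]

lemma deg_Gp_zero {G : SimpleGraph (Fin n)} (hn : 4 ≤ n) (hG : IsMOPFin n G)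
    (hear : ∀ u, G.Adj (zz n) u ↔ (u = ww n ∨ u = 0))
    {y : Fin n} (hy0 : G.Adj 0 y) (hyw : G.Adj (ww n) y) (hyp : 0 < y.val) (hyl : y.val < n - 2) :
    (y.val = 1 → degSet (Gp n G) 0 = 2) ∧ (y.val ≠ 1 → 3 ≤ degSet (Gp n G) 0) := by
  have hw0 : G.Adj (ww n) 0 := adj_ww_zero hn hG hear
  have hnc := hG.2.2.1
  have hv0 : ((0 : Fin n)).val = 0 := rfl
  have hwv : (ww n).val = n - 2 := rfl
  have hv0' : ((0 : Fin (n - 1))).val = 0 := rfl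
  have hone : (1 : ℕ) < n - 1 := by omega
  set one' : Fin (n - 1) := ⟨1, hone⟩ with hone'
  set wq : Fin (n - 1) := zz (n - 1) with hwq
  have hwqv : wq.val = n - 2 := by rw [hwq]; show n - 1 - 1 = n - 2; omega
  have hembz : emb n (0 : Fin (n - 1)) = 0 := Fin.ext rfl
  have hembw : emb n wq = ww n := Fin.ext (by rw [emb_val, hwqv, hwv])
  have hadj01 : (Gp n G).Adj 0 one' := by
    rw [Gp_adj, hembz]
    have h1 : emb n one' = 1 := Fin.ext (by rw [emb_val]; exact (val1 hn).symm)
    rw [h1]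
    exact adj_zero_one hn hG
  have hadj0w : (Gp n G).Adj 0 wq := by
    rw [Gp_adj, hembz, hembw]
    exact hw0.symm
  constructor
  · intro hy1
    have hyis : y = emb n one' := Fin.ext (by rw [emb_val, hy1])
    have hNS : (Gp n G).neighborSet 0 = {one', wq} := by
      ext u'
      simp only [SimpleGraph.mem_neighborSet, Set.mem_insert_iff, Set.mem_singleton_iff]
      constructor
      · intro h
        rw [Gp_adj, hembz] at h
        by_contra hcon
        push_neg at hcon
        obtain ⟨hu1, hu2⟩ := hcon
        have hu1v : u'.val ≠ 1 := fun hv => hu1 (Fin.ext hv)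
        have hu2v : u'.val ≠ n - 2 := fun hv => hu2 (Fin.ext (by rw [hwqv]; exact hv))
        have hu0v : u'.val ≠ 0 := by
          intro hv
          have : emb n u' = 0 := Fin.ext hv
          rw [this] at h
          exact G.loopless.irrefl 0 h
        refine hnc y (ww n) (emb n u') 0 hyw.symm h.symm ?_
        rw [crossing_iff]
        have heuv : (emb n u').val = u'.val := rfl
        have := u'.isLt
        omega
      · rintro (rfl | rfl)
        · exact hadj01
        · exact hadj0w
    rw [degSet, hNS]
    refine Set.ncard_pair ?_
    intro h
    have := congrArg Fin.val h
    rw [hwqv] at this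
    have : (1 : ℕ) = n - 2 := this
    omega
  · intro hy1
    have hylt : y.val < n - 1 := by omega
    set y' : Fin (n - 1) := ⟨y.val, hylt⟩ with hy'
    have hemby : emb n y' = y := Fin.ext rfl
    have hsub : ({one', y', wq} : Set (Fin (n - 1))) ⊆ (Gp n G).neighborSet 0 := by
      rintro u' (rfl | rfl | rfl)
      · exact hadj01
      · rw [SimpleGraph.mem_neighborSet, Gp_adj, hembz, hemby]
        exact hy0
      · exact hadj0w
    have h3 : ({one', y', wq} : Set (Fin (n - 1))).ncard = 3 := by
      have e1 : one'.val = 1 := rfl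
      have e2 : y'.val = y.val := rfl
      refine ncard_triple _ _ _ ?_ ?_ ?_
      · intro h; have h2 := congrArg Fin.val h; omega
      · intro h; have h2 := congrArg Fin.val h; omega
      · intro h; have h2 := congrArg Fin.val h; omega
    rw [degSet, ← h3]
    exact Set.ncard_le_ncard hsub (Set.toFinite _)

lemma deg_Gp_ww {G : SimpleGraph (Fin n)} (hn : 4 ≤ n) (hG : IsMOPFin n G)
    (hear : ∀ u, G.Adj (zz n) u ↔ (u = ww n ∨ u = 0))
    {y : Fin n} (hy0 : G.Adj 0 y) (hyw : G.Adj (ww n) y) (hyp : 0 < y.val) (hyl : y.val < n - 2) :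
    (y.val = n - 3 → degSet (Gp n G) (zz (n - 1)) = 2) ∧
      (y.val ≠ n - 3 → 3 ≤ degSet (Gp n G) (zz (n - 1))) := by
  have hw0 : G.Adj (ww n) 0 := adj_ww_zero hn hG hear
  have hnc := hG.2.2.1
  have hham := hG.2.1
  have hv0 : ((0 : Fin n)).val = 0 := rfl
  have hwv : (ww n).val = n - 2 := rfl
  have hm3 : (n : ℕ) - 3 < n - 1 := by omega
  set m3 : Fin (n - 1) := ⟨n - 3, hm3⟩ with hm3'
  set wq : Fin (n - 1) := zz (n - 1) with hwq
  have hwqv : wq.val = n - 2 := by rw [hwq]; show n - 1 - 1 = n - 2; omega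
  have hembz : emb n (0 : Fin (n - 1)) = 0 := Fin.ext rfl
  have hembw : emb n wq = ww n := Fin.ext (by rw [emb_val, hwqv, hwv])
  have hadjwm : (Gp n G).Adj wq m3 := by
    rw [Gp_adj, hembw]
    have h1 := hham (emb n m3)
    have h2 : emb n m3 + 1 = ww n := by
      apply Fin.ext
      rw [val_add_one_gen (by omega : 2 ≤ n), emb_val]
      show ((n - 3 : ℕ) + 1) % n = n - 2
      rw [Nat.mod_eq_of_lt (by omega)]
      omega
    rw [h2] at h1
    exact h1.symm
  have hadjw0 : (Gp n G).Adj wq 0 := by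
    rw [Gp_adj, hembw, hembz]
    exact hw0
  constructor
  · intro hy3
    have hNS : (Gp n G).neighborSet wq = {m3, 0} := by
      ext u'
      simp only [SimpleGraph.mem_neighborSet, Set.mem_insert_iff, Set.mem_singleton_iff]
      constructor
      · intro h
        rw [Gp_adj, hembw] at h
        by_contra hcon
        push_neg at hcon
        obtain ⟨hu1, hu2⟩ := hcon
        have hu1v : u'.val ≠ n - 3 := fun hv => hu1 (Fin.ext hv)
        have hu0v : u'.val ≠ 0 := fun hv => hu2 (Fin.ext hv)
        have hu2v : u'.val ≠ n - 2 := by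
          intro hv
          have : emb n u' = ww n := Fin.ext (by rw [emb_val, hv, hwv])
          rw [this] at h
          exact G.loopless.irrefl _ h
        refine hnc 0 y (emb n u') (ww n) hy0 h.symm ?_
        rw [crossing_iff]
        have heuv : (emb n u').val = u'.val := rfl
        have := u'.isLt
        omega
      · rintro (rfl | rfl)
        · exact hadjwm
        · exact hadjw0
    rw [degSet, hNS]
    refine Set.ncard_pair ?_
    intro h
    have e1 : m3.val = n - 3 := rfl
    have e3 : ((0 : Fin (n - 1))).val = 0 := rfl
    have h2 := congrArg Fin.val h
    omega
  · intro hy3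
    have hylt : y.val < n - 1 := by omega
    set y' : Fin (n - 1) := ⟨y.val, hylt⟩ with hy'
    have hemby : emb n y' = y := Fin.ext rfl
    have hsub : ({m3, y', 0} : Set (Fin (n - 1))) ⊆ (Gp n G).neighborSet wq := by
      rintro u' (rfl | rfl | rfl)
      · exact hadjwm
      · rw [SimpleGraph.mem_neighborSet, Gp_adj, hembw, hemby]
        exact hyw
      · exact hadjw0
    have h3 : ({m3, y', 0} : Set (Fin (n - 1))).ncard = 3 := by
      have e1 : m3.val = n - 3 := rfl
      have e2 : y'.val = y.val := rfl
      have e3 : ((0 : Fin (n - 1))).val = 0 := rfl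
      refine ncard_triple _ _ _ ?_ ?_ ?_
      · intro h; have h2 := congrArg Fin.val h; omega
      · intro h; have h2 := congrArg Fin.val h; omega
      · intro h; have h2 := congrArg Fin.val h; omega
    rw [degSet, ← h3]
    exact Set.ncard_le_ncard hsub (Set.toFinite _)

end StepE

section StepF

variable {n : ℕ} [NeZero n] [NeZero (n - 1)]

lemma D_eq {G : SimpleGraph (Fin n)} (hn : 4 ≤ n) (hG : IsMOPFin n G)
    (hear : ∀ u, G.Adj (zz n) u ↔ (u = ww n ∨ u = 0))
    {y : Fin n} (hy0 : G.Adj 0 y) (hyw : G.Adj (ww n) y) (hyp : 0 < y.val) (hyl : y.val < n - 2) :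
    {v : Fin n | degSet G v = 2} =
      insert (zz n) (emb n ''
        ({v' : Fin (n - 1) | degSet (Gp n G) v' = 2} \ {(0 : Fin (n - 1)), zz (n - 1)})) := by
  have hembz : emb n (0 : Fin (n - 1)) = 0 := Fin.ext rfl
  have hwqv : (zz (n - 1)).val = n - 2 := by show n - 1 - 1 = n - 2; omega
  have hembw : emb n (zz (n - 1)) = ww n := Fin.ext (by rw [emb_val, hwqv]; rfl)
  have h0deg : degSet G 0 = degSet (Gp n G) 0 + 1 := by
    have := deg_end hn hear (v := (0 : Fin (n - 1))) (Or.inl rfl)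
    rwa [hembz] at this
  have hwdeg : degSet G (ww n) = degSet (Gp n G) (zz (n - 1)) + 1 := by
    have := deg_end hn hear (v := zz (n - 1)) (Or.inr hwqv)
    rwa [hembw] at this
  have h0ge : 2 ≤ degSet (Gp n G) 0 := by
    rcases eq_or_ne y.val 1 with h | h
    · rw [(deg_Gp_zero hn hG hear hy0 hyw hyp hyl).1 h]
    · have := (deg_Gp_zero hn hG hear hy0 hyw hyp hyl).2 h; omega
  have hwge : 2 ≤ degSet (Gp n G) (zz (n - 1)) := by
    rcases eq_or_ne y.val (n - 3) with h | h
    · rw [(deg_Gp_ww hn hG hear hy0 hyw hyp hyl).1 h]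
    · have := (deg_Gp_ww hn hG hear hy0 hyw hyp hyl).2 h; omega
  ext v
  simp only [Set.mem_setOf_eq, Set.mem_insert_iff, Set.mem_image, Set.mem_diff,
    Set.mem_singleton_iff]
  constructor
  · intro hv
    rcases eq_or_ne v.val (n - 1) with hvz | hvz
    · left; exact Fin.ext hvz
    · right
      have hvlt : v.val < n - 1 := by have := v.isLt; omega
      have hv0 : v.val ≠ 0 := by
        intro h
        have : v = 0 := Fin.ext h
        rw [this, h0deg] at hv
        omega
      have hvw : v.val ≠ n - 2 := by
        intro h
        have : v = ww n := Fin.ext h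
        rw [this, hwdeg] at hv
        omega
      refine ⟨⟨v.val, hvlt⟩, ⟨⟨?_, ?_⟩, Fin.ext rfl⟩⟩
      · rw [← deg_mid hn hear (v := ⟨v.val, hvlt⟩) hv0 hvw]
        have he : emb n ⟨v.val, hvlt⟩ = v := Fin.ext rfl
        rw [he]
        exact hv
      · rintro (h | h)
        · exact hv0 (congrArg Fin.val h)
        · have h2 := congrArg Fin.val h; rw [hwqv] at h2; exact hvw h2
  · rintro (rfl | ⟨v', ⟨⟨hv', hnp⟩, rfl⟩⟩)
    · exact deg_zz hn hear
    · have hv0 : v'.val ≠ 0 := fun h => hnp (Or.inl (Fin.ext h))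
      have hvw : v'.val ≠ n - 2 := fun h => hnp (Or.inr (Fin.ext (by rw [hwqv]; exact h)))
      rw [deg_mid hn hear hv0 hvw]
      exact hv'

lemma ears_count {G : SimpleGraph (Fin n)} (hn5 : 5 ≤ n) (hG : IsMOPFin n G)
    (hear : ∀ u, G.Adj (zz n) u ↔ (u = ww n ∨ u = 0))
    {y : Fin n} (hy0 : G.Adj 0 y) (hyw : G.Adj (ww n) y) (hyp : 0 < y.val) (hyl : y.val < n - 2) :
    ({v : Fin n | degSet G v = 2}.ncard
        = {v' : Fin (n - 1) | degSet (Gp n G) v' = 2}.ncard + 1 ∧ ¬(y.val = 1 ∨ y.val = n - 3))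
    ∨ ({v : Fin n | degSet G v = 2}.ncard
        = {v' : Fin (n - 1) | degSet (Gp n G) v' = 2}.ncard ∧ (y.val = 1 ∨ y.val = n - 3)) := by
  have hn : 4 ≤ n := by omega
  set D' := {v' : Fin (n - 1) | degSet (Gp n G) v' = 2} with hD'
  have hDeq := D_eq hn hG hear hy0 hyw hyp hyl
  have hzz_not : zz n ∉ emb n '' (D' \ {(0 : Fin (n - 1)), zz (n - 1)}) := by
    rintro ⟨v', -, hv'⟩
    have h2 := congrArg Fin.val hv'
    have h3 : v'.val = n - 1 := h2
    have := v'.isLt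
    omega
  have hcard : {v : Fin n | degSet G v = 2}.ncard
      = (D' \ {(0 : Fin (n - 1)), zz (n - 1)}).ncard + 1 := by
    rw [hDeq, Set.ncard_insert_of_notMem hzz_not (Set.toFinite _),
      Set.ncard_image_of_injective _ emb_inj]
  have hwqv : (zz (n - 1)).val = n - 2 := by show n - 1 - 1 = n - 2; omega
  have hv0' : ((0 : Fin (n - 1))).val = 0 := rfl
  have hne0w : (0 : Fin (n - 1)) ≠ zz (n - 1) := by
    intro h; have := congrArg Fin.val h; rw [hwqv] at this; rw [hv0'] at this; omega
  by_cases hy1 : y.val = 1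
  · right
    refine ⟨?_, Or.inl hy1⟩
    have h0in : (0 : Fin (n - 1)) ∈ D' := (deg_Gp_zero hn hG hear hy0 hyw hyp hyl).1 hy1
    have hwnot : zz (n - 1) ∉ D' := by
      have h3 := (deg_Gp_ww hn hG hear hy0 hyw hyp hyl).2 (by omega : y.val ≠ n - 3)
      intro h; rw [hD', Set.mem_setOf_eq] at h; omega
    have hdiff : D' \ {(0 : Fin (n - 1)), zz (n - 1)} = D' \ {(0 : Fin (n - 1))} := by
      ext x
      simp only [Set.mem_diff, Set.mem_insert_iff, Set.mem_singleton_iff]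
      constructor
      · rintro ⟨hx, hx2⟩; exact ⟨hx, fun h => hx2 (Or.inl h)⟩
      · rintro ⟨hx, hx2⟩
        refine ⟨hx, ?_⟩
        rintro (h | h)
        · exact hx2 h
        · rw [h] at hx; exact hwnot hx
    rw [hcard, hdiff, Set.ncard_diff_singleton_add_one h0in (Set.toFinite _)]
  · by_cases hy3 : y.val = n - 3
    · right
      refine ⟨?_, Or.inr hy3⟩
      have hwin : zz (n - 1) ∈ D' := (deg_Gp_ww hn hG hear hy0 hyw hyp hyl).1 hy3
      have h0not : (0 : Fin (n - 1)) ∉ D' := by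
        have h3 := (deg_Gp_zero hn hG hear hy0 hyw hyp hyl).2 hy1
        intro h; rw [hD', Set.mem_setOf_eq] at h; omega
      have hdiff : D' \ {(0 : Fin (n - 1)), zz (n - 1)} = D' \ {zz (n - 1)} := by
        ext x
        simp only [Set.mem_diff, Set.mem_insert_iff, Set.mem_singleton_iff]
        constructor
        · rintro ⟨hx, hx2⟩; exact ⟨hx, fun h => hx2 (Or.inr h)⟩
        · rintro ⟨hx, hx2⟩
          refine ⟨hx, ?_⟩
          rintro (h | h)
          · rw [h] at hx; exact h0not hx
          · exact hx2 h
      rw [hcard, hdiff, Set.ncard_diff_singleton_add_one hwin (Set.toFinite _)]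
    · left
      refine ⟨?_, by tauto⟩
      have h0not : (0 : Fin (n - 1)) ∉ D' := by
        have h3 := (deg_Gp_zero hn hG hear hy0 hyw hyp hyl).2 hy1
        intro h; rw [hD', Set.mem_setOf_eq] at h; omega
      have hwnot : zz (n - 1) ∉ D' := by
        have h3 := (deg_Gp_ww hn hG hear hy0 hyw hyp hyl).2 hy3
        intro h; rw [hD', Set.mem_setOf_eq] at h; omega
      have hdiff : D' \ {(0 : Fin (n - 1)), zz (n - 1)} = D' := by
        ext x
        simp only [Set.mem_diff, Set.mem_insert_iff, Set.mem_singleton_iff]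
        constructor
        · rintro ⟨hx, -⟩; exact hx
        · intro hx
          refine ⟨hx, ?_⟩
          rintro (h | h)
          · rw [h] at hx; exact h0not hx
          · rw [h] at hx; exact hwnot hx
      rw [hcard, hdiff]

end StepF

section StepG

variable {n : ℕ} [NeZero n]

lemma ww_add_one (hn : 4 ≤ n) : ww n + 1 = zz n := by
  apply Fin.ext
  rw [val_add_one_gen (by omega : 2 ≤ n), ww_val, zz_val, Nat.mod_eq_of_lt (by omega)]
  omega

lemma zz_not_mem_IT {G : SimpleGraph (Fin n)} (hn : 4 ≤ n)
    (hear : ∀ u, G.Adj (zz n) u ↔ (u = ww n ∨ u = 0))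
    {T : Finset (Fin n)} (hT : T ∈ InternalTriangles n G) : zz n ∉ T := by
  intro hzzT
  obtain ⟨hcard, hadj, hcons⟩ := hT
  have herase : (T.erase (zz n)).card = 2 := by
    rw [Finset.card_erase_of_mem hzzT, hcard]
  obtain ⟨b, c, hbc, hbceq⟩ := Finset.card_eq_two.mp herase
  have hbmem : b ∈ T.erase (zz n) := by rw [hbceq]; simp
  have hcmem : c ∈ T.erase (zz n) := by rw [hbceq]; simp
  have hbT : b ∈ T := Finset.mem_of_mem_erase hbmem
  have hcT : c ∈ T := Finset.mem_of_mem_erase hcmem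
  have hbne : b ≠ zz n := Finset.ne_of_mem_erase hbmem
  have hcne : c ≠ zz n := Finset.ne_of_mem_erase hcmem
  have hb : b = ww n ∨ b = 0 := (hear b).mp (hadj (zz n) hzzT b hbT (fun h => hbne h.symm)).symm.symm
  have hc : c = ww n ∨ c = 0 := (hear c).mp (hadj (zz n) hzzT c hcT (fun h => hcne h.symm)).symm.symm
  have hwT : ww n ∈ T := by
    rcases hb with rfl | rfl
    · exact hbT
    · rcases hc with rfl | rfl
      · exact hcT
      · exact absurd rfl hbc
  exact hcons (ww n) hwT (zz n) hzzT (ww_add_one hn).symm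

variable [NeZero (n - 1)]

lemma IT_emb_iff (hn : 4 ≤ n) {G : SimpleGraph (Fin n)} (T' : Finset (Fin (n - 1))) :
    T' ∈ InternalTriangles (n - 1) (Gp n G) ↔
      (T'.image (emb n) ∈ InternalTriangles n G ∧
        ¬((0 : Fin (n - 1)) ∈ T' ∧ zz (n - 1) ∈ T')) := by
  have hwqv : (zz (n - 1)).val = n - 2 := by show n - 1 - 1 = n - 2; omega
  have hv0' : ((0 : Fin (n - 1))).val = 0 := rfl
  constructor
  · rintro ⟨hcard, hadj, hcons⟩
    refine ⟨⟨?_, ?_, ?_⟩, ?_⟩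
    · rw [Finset.card_image_of_injective _ emb_inj]; exact hcard
    · intro a ha b hb hne
      rw [Finset.mem_image] at ha hb
      obtain ⟨a', ha', rfl⟩ := ha
      obtain ⟨b', hb', rfl⟩ := hb
      exact hadj a' ha' b' hb' (fun h => hne (congrArg (emb n) h))
    · intro a ha b hb
      rw [Finset.mem_image] at ha hb
      obtain ⟨a', ha', rfl⟩ := ha
      obtain ⟨b', hb', rfl⟩ := hb
      intro heq
      have hval : b'.val = (a'.val + 1) % n := by
        have := congrArg Fin.val heq
        rwa [val_add_one_gen (by omega : 2 ≤ n) (emb n a')] at this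
      have ha'lt : a'.val < n - 1 := a'.isLt
      have hb'lt : b'.val < n - 1 := b'.isLt
      rcases Nat.lt_or_ge a'.val (n - 2) with hlt | hge
      · have hv : b'.val = a'.val + 1 := by
          rwa [Nat.mod_eq_of_lt (by omega)] at hval
        refine hcons a' ha' b' hb' (Fin.ext ?_)
        rw [val_add_one_gen (by omega : 2 ≤ n - 1) a', Nat.mod_eq_of_lt (by omega)]
        exact hv
      · have ha2 : a'.val = n - 2 := by omega
        rw [Nat.mod_eq_of_lt (by omega)] at hval
        omega
    · rintro ⟨h0, hw⟩
      refine hcons (zz (n - 1)) hw (0 : Fin (n - 1)) h0 (Fin.ext ?_)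
      rw [val_add_one_gen (by omega : 2 ≤ n - 1), hwqv, hv0']
      have : n - 2 + 1 = n - 1 := by omega
      rw [this, Nat.mod_self]
  · rintro ⟨⟨hcard, hadj, hcons⟩, hnb⟩
    refine ⟨?_, ?_, ?_⟩
    · rw [Finset.card_image_of_injective _ emb_inj] at hcard; exact hcard
    · intro a' ha' b' hb' hne
      exact hadj (emb n a') (Finset.mem_image_of_mem _ ha') (emb n b')
        (Finset.mem_image_of_mem _ hb') (fun h => hne (emb_inj h))
    · intro a' ha' b' hb' heq
      have ha'lt : a'.val < n - 1 := a'.isLt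
      have hval : b'.val = (a'.val + 1) % (n - 1) := by
        have := congrArg Fin.val heq
        rwa [val_add_one_gen (by omega : 2 ≤ n - 1) a'] at this
      rcases Nat.lt_or_ge a'.val (n - 2) with hlt | hge
      · have hv : b'.val = a'.val + 1 := by
          rwa [Nat.mod_eq_of_lt (by omega)] at hval
        have hea : (emb n a').val = a'.val := rfl
        refine hcons (emb n a') (Finset.mem_image_of_mem _ ha') (emb n b')
          (Finset.mem_image_of_mem _ hb') (Fin.ext ?_)
        rw [val_add_one_gen (by omega : 2 ≤ n) (emb n a'), Nat.mod_eq_of_lt (by omega)]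
        exact hv
      · have ha2 : a'.val = n - 2 := by omega
        have haq : a' = zz (n - 1) := Fin.ext (by omega)
        have hb0 : b' = 0 := by
          apply Fin.ext
          rw [hval, hv0', ha2]
          have : n - 2 + 1 = n - 1 := by omega
          rw [this, Nat.mod_self]
        exact hnb ⟨hb0 ▸ hb', haq ▸ ha'⟩

end StepG

section StepH

variable {n : ℕ} [NeZero n] [NeZero (n - 1)]

/-- projection `Fin n → Fin (n-1)` -/
def down (n : ℕ) [NeZero (n - 1)] (u : Fin n) : Fin (n - 1) :=
  ⟨u.val % (n - 1), Nat.mod_lt _ (Nat.pos_of_ne_zero (NeZero.ne (n - 1)))⟩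

lemma emb_down {u : Fin n} (hu : u.val < n - 1) : emb n (down n u) = u := by
  apply Fin.ext
  show u.val % (n - 1) = u.val
  exact Nat.mod_eq_of_lt hu

lemma T_eq_image {G : SimpleGraph (Fin n)} (hn : 4 ≤ n)
    (hear : ∀ u, G.Adj (zz n) u ↔ (u = ww n ∨ u = 0))
    {T : Finset (Fin n)} (hT : T ∈ InternalTriangles n G) :
    T = (T.image (down n)).image (emb n) := by
  have hzzT := zz_not_mem_IT hn hear hT
  rw [Finset.image_image]
  have h1 : T.image ((emb n) ∘ (down n)) = T.image id := by
    apply Finset.image_congr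
    intro x hx
    have hxz : x.val ≠ n - 1 := by
      intro h
      exact hzzT (by rwa [show x = zz n from Fin.ext h] at hx)
    have := x.isLt
    exact emb_down (by omega)
  rw [h1, Finset.image_id]

lemma mem_image_emb_iff {T' : Finset (Fin (n - 1))} {x : Fin n} (hx : x.val < n - 1) :
    x ∈ T'.image (emb n) ↔ down n x ∈ T' := by
  constructor
  · intro h
    rw [Finset.mem_image] at h
    obtain ⟨x', hx', he⟩ := h
    have : down n x = x' := by
      apply emb_inj
      rw [emb_down hx, he]
    rwa [this]
  · intro h
    have := Finset.mem_image_of_mem (emb n) h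
    rwa [emb_down hx] at this

lemma IT_count {G : SimpleGraph (Fin n)} (hn5 : 5 ≤ n) (hG : IsMOPFin n G)
    (hear : ∀ u, G.Adj (zz n) u ↔ (u = ww n ∨ u = 0))
    {y : Fin n} (hy0 : G.Adj 0 y) (hyw : G.Adj (ww n) y) (hyp : 0 < y.val) (hyl : y.val < n - 2)
    (huniq : ∀ y' : Fin n, G.Adj 0 y' → G.Adj (ww n) y' → 0 < y'.val → y'.val < n - 2 → y' = y) :
    ((InternalTriangles n G).ncard = (InternalTriangles (n - 1) (Gp n G)).ncard + 1 ∧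
        ¬(y.val = 1 ∨ y.val = n - 3))
    ∨ ((InternalTriangles n G).ncard = (InternalTriangles (n - 1) (Gp n G)).ncard ∧
        (y.val = 1 ∨ y.val = n - 3)) := by
  have hn : 4 ≤ n := by omega
  have hw0 : G.Adj (ww n) 0 := adj_ww_zero hn hG hear
  have hv0 : ((0 : Fin n)).val = 0 := rfl
  have hwv : (ww n).val = n - 2 := rfl
  have hv1 : ((1 : Fin n)).val = 1 := val1 hn
  have hwqv : (zz (n - 1)).val = n - 2 := by show n - 1 - 1 = n - 2; omega
  have hfinj : Function.Injective (fun T' : Finset (Fin (n - 1)) => T'.image (emb n)) :=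
    Finset.image_injective emb_inj
  -- if a triangle contains both 0 and ww, it is {0, ww, y} and y is "interior"
  have hboth : ∀ T ∈ InternalTriangles n G, (0 : Fin n) ∈ T → ww n ∈ T →
      T = ({0, ww n, y} : Finset (Fin n)) ∧ y.val ≠ 1 ∧ y.val ≠ n - 3 := by
    intro T hT h0T hwT
    have hzzT := zz_not_mem_IT hn hear hT
    obtain ⟨hcard, hadj, hcons⟩ := hT
    have hw0ne : ww n ≠ 0 := by
      intro h; have := congrArg Fin.val h; omega
    have hwe : ww n ∈ T.erase 0 := Finset.mem_erase.mpr ⟨hw0ne, hwT⟩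
    have h1 : ((T.erase 0).erase (ww n)).card = 1 := by
      rw [Finset.card_erase_of_mem hwe, Finset.card_erase_of_mem h0T, hcard]
    obtain ⟨t, ht⟩ := Finset.card_eq_one.mp h1
    have htmem : t ∈ (T.erase 0).erase (ww n) := by rw [ht]; simp
    have htT : t ∈ T := Finset.mem_of_mem_erase (Finset.mem_of_mem_erase htmem)
    have htw : t ≠ ww n := Finset.ne_of_mem_erase htmem
    have ht0 : t ≠ 0 := Finset.ne_of_mem_erase (Finset.mem_of_mem_erase htmem)
    have htz : t ≠ zz n := fun h => hzzT (h ▸ htT)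
    have htv0 : t.val ≠ 0 := fun h => ht0 (Fin.ext h)
    have htvw : t.val ≠ n - 2 := fun h => htw (Fin.ext h)
    have htvz : t.val ≠ n - 1 := fun h => htz (Fin.ext h)
    have htlt := t.isLt
    have hadt0 : G.Adj 0 t := hadj 0 h0T t htT (fun h => ht0 h.symm)
    have hadtw : G.Adj (ww n) t := hadj (ww n) hwT t htT (fun h => htw h.symm)
    have hty : t = y := huniq t hadt0 hadtw (by omega) (by omega)
    subst hty
    have hTeq : T = ({0, ww n, t} : Finset (Fin n)) := by
      ext x
      simp only [Finset.mem_insert, Finset.mem_singleton]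
      constructor
      · intro hx
        by_cases hx0 : x = 0
        · exact Or.inl hx0
        · by_cases hxw : x = ww n
          · exact Or.inr (Or.inl hxw)
          · right; right
            have : x ∈ (T.erase 0).erase (ww n) :=
              Finset.mem_erase.mpr ⟨hxw, Finset.mem_erase.mpr ⟨hx0, hx⟩⟩
            rw [ht] at this
            exact Finset.mem_singleton.mp this
      · rintro (rfl | rfl | rfl)
        · exact h0T
        · exact hwT
        · exact htT
    refine ⟨hTeq, ?_, ?_⟩
    · intro hv
      refine hcons 0 h0T t htT ?_
      rw [zero_add]
      exact Fin.ext (by omega)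
    · intro hv
      refine hcons t htT (ww n) hwT ?_
      apply Fin.ext
      rw [val_add_one_gen (by omega : 2 ≤ n) t, hv, hwv, Nat.mod_eq_of_lt (by omega)]
      omega
  by_cases hflag : y.val = 1 ∨ y.val = n - 3
  · right
    refine ⟨?_, hflag⟩
    have hseteq : InternalTriangles n G
        = (fun T' : Finset (Fin (n - 1)) => T'.image (emb n)) '' InternalTriangles (n - 1) (Gp n G) := by
      ext T
      constructor
      · intro hT
        have hzzT := zz_not_mem_IT hn hear hT
        have hTval : ∀ x ∈ T, x.val < n - 1 := by
          intro x hx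
          have hxz : x.val ≠ n - 1 := fun h => hzzT (by rwa [show x = zz n from Fin.ext h] at hx)
          have := x.isLt
          omega
        have hTimg := T_eq_image hn hear hT
        refine ⟨T.image (down n), ?_, hTimg.symm⟩
        rw [IT_emb_iff hn]
        refine ⟨hTimg ▸ hT, ?_⟩
        rintro ⟨h0', hw'⟩
        -- translate back to 0 ∈ T and ww ∈ T
        have h0T : (0 : Fin n) ∈ T := by
          have hd0 : down n (0 : Fin n) = 0 := Fin.ext (by show 0 % (n-1) = 0; rw [Nat.zero_mod])
          have hmem : down n (0 : Fin n) ∈ T.image (down n) := by rw [hd0]; exact h0'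
          have h2 := (mem_image_emb_iff (T' := T.image (down n))
            (show ((0 : Fin n)).val < n - 1 by omega)).mpr hmem
          rw [← hTimg] at h2; exact h2
        have hwT : ww n ∈ T := by
          have hdw : down n (ww n) = zz (n - 1) := Fin.ext (by show (n-2) % (n-1) = n-1-1; rw [Nat.mod_eq_of_lt (by omega)]; omega)
          have hmem : down n (ww n) ∈ T.image (down n) := by rw [hdw]; exact hw'
          have h2 := (mem_image_emb_iff (T' := T.image (down n))
            (show (ww n).val < n - 1 by rw [hwv]; omega)).mpr hmem
          rw [← hTimg] at h2; exact h2
        obtain ⟨-, hy1, hy3⟩ := hboth T hT h0T hwT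
        tauto
      · rintro ⟨T', hT', rfl⟩
        exact ((IT_emb_iff hn T').mp hT').1
    rw [hseteq, Set.ncard_image_of_injective _ hfinj]
  · left
    refine ⟨?_, hflag⟩
    push_neg at hflag
    obtain ⟨hy1, hy3⟩ := hflag
    have hyv0 : y ≠ 0 := fun h => by rw [h] at hyp; exact absurd hyp (by omega)
    have hyvw : y ≠ ww n := fun h => by
      have := congrArg Fin.val h; omega
    -- {0, ww, y} is an internal triangle
    have hytri : ({0, ww n, y} : Finset (Fin n)) ∈ InternalTriangles n G := by
      refine ⟨?_, ?_, ?_⟩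
      · rw [Finset.card_insert_of_notMem, Finset.card_insert_of_notMem, Finset.card_singleton]
        · intro h; rw [Finset.mem_singleton] at h; exact hyvw h.symm
        · intro h
          rw [Finset.mem_insert, Finset.mem_singleton] at h
          rcases h with h | h
          · have := congrArg Fin.val h; omega
          · exact hyv0 h.symm
      · intro a ha b hb hne
        simp only [Finset.mem_insert, Finset.mem_singleton] at ha hb
        rcases ha with rfl | rfl | rfl <;> rcases hb with rfl | rfl | rfl
        all_goals first
          | exact absurd rfl hne
          | exact hw0.symm
          | exact hw0
          | exact hy0
          | exact hy0.symm
          | exact hyw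
          | exact hyw.symm
      · intro a ha b hb heq
        simp only [Finset.mem_insert, Finset.mem_singleton] at ha hb
        have hav : a.val = 0 ∨ a.val = n - 2 ∨ a.val = y.val := by
          rcases ha with rfl | rfl | rfl
          · left; rfl
          · right; left; rfl
          · right; right; rfl
        have hbv : b.val = 0 ∨ b.val = n - 2 ∨ b.val = y.val := by
          rcases hb with rfl | rfl | rfl
          · left; rfl
          · right; left; rfl
          · right; right; rfl
        have hval := congrArg Fin.val heq
        rw [val_add_one_gen (by omega : 2 ≤ n) a, Nat.mod_eq_of_lt (by omega)] at hval
        omega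
    have hnotmem : ({0, ww n, y} : Finset (Fin n)) ∉
        (fun T' : Finset (Fin (n - 1)) => T'.image (emb n)) '' InternalTriangles (n - 1) (Gp n G) := by
      rintro ⟨T', hT', heq⟩
      have heq' : T'.image (emb n) = ({0, ww n, y} : Finset (Fin n)) := heq
      obtain ⟨-, hnb⟩ := (IT_emb_iff hn T').mp hT'
      refine hnb ⟨?_, ?_⟩
      · have h0m : (0 : Fin n) ∈ T'.image (emb n) := by
          rw [heq']; simp
        have := (mem_image_emb_iff (by omega : ((0 : Fin n)).val < n - 1)).mp h0m
        have hd0 : down n (0 : Fin n) = 0 := Fin.ext (by show 0 % (n-1) = 0; rw [Nat.zero_mod])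
        rwa [hd0] at this
      · have hwm : ww n ∈ T'.image (emb n) := by
          rw [heq']
          simp only [Finset.mem_insert, Finset.mem_singleton]
          tauto
        have := (mem_image_emb_iff (show (ww n).val < n - 1 by rw [hwv]; omega)).mp hwm
        have hdw : down n (ww n) = zz (n - 1) := Fin.ext (by show (n-2) % (n-1) = n-1-1; rw [Nat.mod_eq_of_lt (by omega)]; omega)
        rwa [hdw] at this
    have hseteq : InternalTriangles n G
        = insert ({0, ww n, y} : Finset (Fin n))
          ((fun T' : Finset (Fin (n - 1)) => T'.image (emb n)) '' InternalTriangles (n - 1) (Gp n G)) := by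
      ext T
      simp only [Set.mem_insert_iff]
      constructor
      · intro hT
        by_cases hb : (0 : Fin n) ∈ T ∧ ww n ∈ T
        · exact Or.inl (hboth T hT hb.1 hb.2).1
        · right
          have hzzT := zz_not_mem_IT hn hear hT
          have hTimg := T_eq_image hn hear hT
          refine ⟨T.image (down n), ?_, hTimg.symm⟩
          rw [IT_emb_iff hn]
          refine ⟨hTimg ▸ hT, ?_⟩
          rintro ⟨h0', hw'⟩
          refine hb ⟨?_, ?_⟩
          · have hd0 : down n (0 : Fin n) = 0 := Fin.ext (by show 0 % (n-1) = 0; rw [Nat.zero_mod])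
            have hmem : down n (0 : Fin n) ∈ T.image (down n) := by rw [hd0]; exact h0'
            have h2 := (mem_image_emb_iff (T' := T.image (down n))
              (show ((0 : Fin n)).val < n - 1 by omega)).mpr hmem
            rw [← hTimg] at h2; exact h2
          · have hdw : down n (ww n) = zz (n - 1) := Fin.ext (by show (n-2) % (n-1) = n-1-1; rw [Nat.mod_eq_of_lt (by omega)]; omega)
            have hmem : down n (ww n) ∈ T.image (down n) := by rw [hdw]; exact hw'
            have h2 := (mem_image_emb_iff (T' := T.image (down n))
              (show (ww n).val < n - 1 by rw [hwv]; omega)).mpr hmem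
            rw [← hTimg] at h2; exact h2
      · rintro (rfl | ⟨T', hT', rfl⟩)
        · exact hytri
        · exact ((IT_emb_iff hn T').mp hT').1
    rw [hseteq, Set.ncard_insert_of_notMem hnotmem (Set.toFinite _),
      Set.ncard_image_of_injective _ hfinj]

end StepH

section Base

lemma base4 {G : SimpleGraph (Fin 4)} (hG : IsMOPFin 4 G)
    (hear : ∀ u, G.Adj (zz 4) u ↔ (u = ww 4 ∨ u = 0)) :
    {v : Fin 4 | degSet G v = 2}.ncard = (InternalTriangles 4 G).ncard + 2 := by
  have hw0 : G.Adj (ww 4) 0 := adj_ww_zero (by omega) hG hear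
  have hz3 : zz 4 = 3 := by decide
  have hw2 : ww 4 = 2 := by decide
  rw [hz3] at hear
  rw [hw2] at hear hw0
  have hham := hG.2.1
  have h01 : G.Adj 0 1 := by have := hham 0; rwa [show (0:Fin 4) + 1 = 1 by decide] at this
  have h12 : G.Adj 1 2 := by have := hham 1; rwa [show (1:Fin 4) + 1 = 2 by decide] at this
  have h23 : G.Adj 2 3 := by have := hham 2; rwa [show (2:Fin 4) + 1 = 3 by decide] at this
  have h30 : G.Adj 3 0 := (hear 0).mpr (Or.inr rfl)
  have hn13 : ¬ G.Adj 1 3 := by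
    intro h
    rcases (hear 1).mp h.symm with h2 | h2 <;> exact absurd h2 (by decide)
  -- neighbourhoods
  have hNS0 : G.neighborSet 0 = {1, 2, 3} := by
    ext u
    simp only [SimpleGraph.mem_neighborSet, Set.mem_insert_iff, Set.mem_singleton_iff]
    fin_cases u
    · exact iff_of_false (G.loopless.irrefl 0) (by decide)
    · exact iff_of_true (h01) (by decide)
    · exact iff_of_true (hw0.symm) (by decide)
    · exact iff_of_true (h30.symm) (by decide)
  have hNS1 : G.neighborSet 1 = {0, 2} := by
    ext u
    simp only [SimpleGraph.mem_neighborSet, Set.mem_insert_iff, Set.mem_singleton_iff]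
    fin_cases u
    · exact iff_of_true (h01.symm) (by decide)
    · exact iff_of_false (G.loopless.irrefl 1) (by decide)
    · exact iff_of_true (h12) (by decide)
    · exact iff_of_false (hn13) (by decide)
  have hNS2 : G.neighborSet 2 = {1, 3, 0} := by
    ext u
    simp only [SimpleGraph.mem_neighborSet, Set.mem_insert_iff, Set.mem_singleton_iff]
    fin_cases u
    · exact iff_of_true (hw0) (by decide)
    · exact iff_of_true (h12.symm) (by decide)
    · exact iff_of_false (G.loopless.irrefl 2) (by decide)
    · exact iff_of_true (h23) (by decide)
  have hNS3 : G.neighborSet 3 = {2, 0} := by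
    ext u
    simp only [SimpleGraph.mem_neighborSet, Set.mem_insert_iff, Set.mem_singleton_iff]
    exact hear u
  have hdeg0 : degSet G 0 = 3 := by
    rw [degSet, hNS0]; exact ncard_triple _ _ _ (by decide) (by decide) (by decide)
  have hdeg1 : degSet G 1 = 2 := by
    rw [degSet, hNS1]; exact Set.ncard_pair (by decide)
  have hdeg2 : degSet G 2 = 3 := by
    rw [degSet, hNS2]; exact ncard_triple _ _ _ (by decide) (by decide) (by decide)
  have hdeg3 : degSet G 3 = 2 := by
    rw [degSet, hNS3]; exact Set.ncard_pair (by decide)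
  have hD : {v : Fin 4 | degSet G v = 2} = {1, 3} := by
    ext v
    simp only [Set.mem_setOf_eq, Set.mem_insert_iff, Set.mem_singleton_iff]
    fin_cases v
    · exact iff_of_false (by rw [show (⟨0, by omega⟩ : Fin 4) = 0 from rfl, hdeg0]; omega) (by decide)
    · exact iff_of_true (by rw [show (⟨1, by omega⟩ : Fin 4) = 1 from rfl]; exact hdeg1) (by decide)
    · exact iff_of_false (by rw [show (⟨2, by omega⟩ : Fin 4) = 2 from rfl, hdeg2]; omega) (by decide)
    · exact iff_of_true (by rw [show (⟨3, by omega⟩ : Fin 4) = 3 from rfl]; exact hdeg3) (by decide)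
  have hIT : InternalTriangles 4 G = ∅ := by
    ext T
    simp only [Set.mem_empty_iff_false, iff_false]
    rintro ⟨hcard, hadj, hcons⟩
    obtain ⟨a, b, c, hab, hac, hbc, rfl⟩ := Finset.card_eq_three.mp hcard
    have key : ∀ a b c : Fin 4, a ≠ b → a ≠ c → b ≠ c →
        ∃ u ∈ ({a, b, c} : Finset (Fin 4)), ∃ v ∈ ({a, b, c} : Finset (Fin 4)), v = u + 1 := by
      decide
    obtain ⟨u, hu, v, hv, he⟩ := key a b c hab hac hbc
    exact hcons u hu v hv he
  rw [hD, hIT, Set.ncard_pair (by decide : (1 : Fin 4) ≠ 3), Set.ncard_empty]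

end Base

theorem mop_count : ∀ n : ℕ, ∀ inst : NeZero n, 4 ≤ n → ∀ G : SimpleGraph (Fin n),
    @IsMOPFin n inst G →
    {v : Fin n | degSet G v = 2}.ncard = (@InternalTriangles n inst G).ncard + 2 := by
  intro n
  induction n using Nat.strong_induction_on with
  | _ n IH =>
    intro inst hn G hG
    haveI : NeZero n := inst
    obtain ⟨a, hadj02, hearG⟩ := exists_ear hn hG
    have hGSmop := isMOP_shift hG (a + 2)
    -- arithmetic facts about zz and ww
    have hz1 : zz n + 1 = 0 := by
      apply Fin.ext
      rw [val_add_one_gen (by omega : 2 ≤ n), zz_val]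
      show (n - 1 + 1) % n = 0
      rw [show n - 1 + 1 = n by omega, Nat.mod_self]
    have hw1 : ww n + 1 = zz n := ww_add_one hn
    have hzza : zz n + (a + 2) = a + 1 := by
      have : zz n + (a + 2) = (zz n + 1) + (a + 1) := by ring
      rw [this, hz1, zero_add]
    have hwwa : ww n + (a + 2) = a := by
      have : ww n + (a + 2) = ((ww n + 1) + 1) + a := by ring
      rw [this, hw1, hz1, zero_add]
    have hear2 : ∀ u, (shiftG G (a + 2)).Adj (zz n) u ↔ (u = ww n ∨ u = 0) := by
      intro u
      show G.Adj (zz n + (a + 2)) (u + (a + 2)) ↔ _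
      rw [hzza, hearG (u + (a + 2))]
      constructor
      · rintro (h | h)
        · left
          have : u + (a + 2) = ww n + (a + 2) := by rw [hwwa]; exact h
          exact add_right_cancel this
        · right
          have : u + (a + 2) = 0 + (a + 2) := by rw [zero_add]; exact h
          exact add_right_cancel this
      · rintro (rfl | rfl)
        · left; exact hwwa
        · right; rw [zero_add]
    have hearsEq := ears_shift_ncard G (a + 2)
    have hITEq := internalTriangles_shift_ncard G (a + 2)
    rw [← hearsEq, ← hITEq]
    rcases eq_or_lt_of_le hn with h4 | h5
    · subst h4
      exact base4 hGSmop hear2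
    · have h5' : 5 ≤ n := h5
      haveI hnz1 : NeZero (n - 1) := ⟨by omega⟩
      obtain ⟨y, hy0, hyw, hyp, hyl, huniq⟩ := exists_y hn hGSmop hear2
      have hGpmop := mop_Gp hn hGSmop hear2
      have hIH := IH (n - 1) (by omega) hnz1 (by omega) (Gp n (shiftG G (a + 2))) hGpmop
      have hec := ears_count h5' hGSmop hear2 hy0 hyw hyp hyl
      have hic := IT_count h5' hGSmop hear2 hy0 hyw hyp hyl huniq
      rcases hec with ⟨he, hf⟩ | ⟨he, hf⟩ <;> rcases hic with ⟨hi, hf2⟩ | ⟨hi, hf2⟩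
      · omega
      · exact absurd hf2 hf
      · exact absurd hf hf2
      · omega

/-- A maximal outerplanar graph of order `n ≥ 4` with `k` internal
triangles has exactly `k + 2` vertices of degree 2. -/
theorem stmt_6 (n k : ℕ) [NeZero n] (hn : 4 ≤ n) (G : SimpleGraph (Fin n))
    (hG : IsMOPFin n G) (hk : (InternalTriangles n G).ncard = k) :
    {v : Fin n | degSet G v = 2}.ncard = k + 2 := by
  subst hk
  exact mop_count n inferInstance hn G hG
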